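/- Let n ∈ ℕ, let I be a finite set, and let (X_i)_{i∈I} be a family of path-connected Hausdorff topological spaces. For a point x = (x_i)_{i∈I} of the product Π_{i∈I} X_i (with the product topology), x is a π_n-wild point of Π_{i∈I} X_i if and only if there exists i ∈ I such that x_i is a π_n-wild point of X_i. -/

import Mathlib

open Filter Topology

/-- The unit `n`-sphere in `ℝ^(n+1)`. -/
abbrev Sph (n : ℕ) : Type :=
  Metric.sphere (0 : EuclideanSpace ℝ (Fin (n + 1))) 1

/-- The basepoint `s₀ = (1,0,…,0)` of the unit `n`-sphere. -/
noncomputable def spherePt (n : ℕ) : Sph n :=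
  ⟨EuclideanSpace.single 0 1, by
    simp [mem_sphere_zero_iff_norm, EuclideanSpace.norm_single]⟩

/-- A continuous map `S^n → X` is essential if it is not homotopic to a constant map. -/
def Essential {n : ℕ} {X : Type*} [TopologicalSpace X] (f : C(Sph n, X)) : Prop :=
  ∀ x : X, ¬ f.Homotopic (ContinuousMap.const (Sph n) x)

/-- `x` is a `π_n`-wild point of `X` if there is a sequence of essential maps
`S^n → X` based at `x` converging to the constant map at `x` in the compact-open
topology. -/
def IsWildPoint (n : ℕ) {X : Type*} [TopologicalSpace X] (x : X) : Prop :=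
  ∃ f : ℕ → C(Sph n, X),
    (∀ k, f k (spherePt n) = x) ∧
    (∀ k, Essential (f k)) ∧
    Tendsto f atTop (𝓝 (ContinuousMap.const (Sph n) x))

/-- The `π_n`-wild set of `X`. -/
def wildSet (n : ℕ) (X : Type*) [TopologicalSpace X] : Set X :=
  {x | IsWildPoint n x}

/-- A continuous map is `π_n`-injective if precomposition reflects inessentiality. -/
def PiNInjective (n : ℕ) {X Y : Type*} [TopologicalSpace X] [TopologicalSpace Y]
    (f : C(X, Y)) : Prop :=
  ∀ g : C(Sph n, X),
    (∃ y : Y, (f.comp g).Homotopic (ContinuousMap.const (Sph n) y)) →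
    ∃ x : X, g.Homotopic (ContinuousMap.const (Sph n) x)

/-- `X` is `π_n`-rigid at `x`. -/
def IsRigidAt (n : ℕ) {X : Type*} [TopologicalSpace X] (x : X) : Prop :=
  ∃ f : ℕ → C(Sph n, X),
    (∀ k, f k (spherePt n) = x) ∧
    (∀ k, Essential (f k)) ∧
    Tendsto f atTop (𝓝 (ContinuousMap.const (Sph n) x)) ∧
    ∀ β : C(unitInterval, X), β 0 = x →
      ∀ H : ℕ → C(Sph n × unitInterval, X),
        (∀ k s, H k (s, 0) = f k s) →
        (∀ k t, H k (spherePt n, t) = β t) →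
        Tendsto H atTop (𝓝 (β.comp (ContinuousMap.snd (α := Sph n)))) →
        β 1 = x

/-- wild points of a finite product of path-connected spaces. -/
theorem stmt9 {I : Type*} [Finite I] (n : ℕ) (X : I → Type*)
    [∀ i, TopologicalSpace (X i)] [∀ i, T2Space (X i)] [∀ i, PathConnectedSpace (X i)]
    (x : ∀ i, X i) :
    IsWildPoint n x ↔ ∃ i, IsWildPoint n (x i) := by
  classical
  constructor
  · rintro ⟨f, hb, hEss, hten⟩
    -- projections
    set proj : ∀ i, C(∀ j, X j, X i) := fun i => ⟨fun p => p i, continuous_apply i⟩ with hproj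
    -- some coordinate is essential for infinitely many k
    have key : ∃ i, {k | Essential ((proj i).comp (f k))}.Infinite := by
      by_contra h
      push_neg at h
      have hfin : (⋃ i, {k | Essential ((proj i).comp (f k))}).Finite := by
        apply Set.finite_iUnion
        intro i
        simpa [Set.not_infinite] using h i
      obtain ⟨k, hk⟩ := hfin.infinite_compl.nonempty
      simp only [Set.mem_compl_iff, Set.mem_iUnion, not_exists, Set.mem_setOf_eq] at hk
      -- each coordinate of f k is inessential; build combined homotopy
      have hch : ∀ i, ∃ c : X i, ((proj i).comp (f k)).Homotopic
          (ContinuousMap.const (Sph n) c) := by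
        intro i
        have := hk i
        unfold Essential at this
        push_neg at this
        exact this
      choose c hc using hch
      have H : ∀ i, ((proj i).comp (f k)).Homotopy
          (ContinuousMap.const (Sph n) (c i)) := fun i => (hc i).some
      refine hEss k (fun i => c i) ⟨?_⟩
      refine ⟨⟨fun p i => H i p, ?_⟩, ?_, ?_⟩
      · exact continuous_pi fun i => (H i).continuous
      · intro s; funext i; exact (H i).map_zero_left s
      · intro s; funext i; exact (H i).map_one_left s
    obtain ⟨i, hinf⟩ := key
    obtain ⟨φ, hφ, hφP⟩ := Filter.extraction_of_frequently_atTop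
      (Nat.frequently_atTop_iff_infinite.2 hinf)
    refine ⟨i, fun m => (proj i).comp (f (φ m)), ?_, ?_, ?_⟩
    · intro m; simp [hproj, hb (φ m)]
    · exact fun m => hφP m
    · have h1 : Tendsto (fun m => f (φ m)) atTop (𝓝 (ContinuousMap.const (Sph n) x)) :=
        hten.comp hφ.tendsto_atTop
      have h2 := ((ContinuousMap.continuous_postcomp (proj i)).tendsto _).comp h1
      have he : (proj i).comp (ContinuousMap.const (Sph n) x)
          = ContinuousMap.const (Sph n) (x i) := by ext s; simp [hproj]
      rw [he] at h2
      exact h2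
  · rintro ⟨i, f, hb, hEss, hten⟩
    set u : C(X i, ∀ j, X j) :=
      ⟨fun y => Function.update x i y,
        (continuous_update i).comp (continuous_const.prodMk continuous_id)⟩ with hu
    have hux : u (x i) = x := by
      funext j
      simp [hu, Function.update]
      intro h; subst h; rfl
    refine ⟨fun k => u.comp (f k), ?_, ?_, ?_⟩
    · intro k; simp [hb k, hux]
    · intro k c hhom
      -- project back to coordinate i
      have hp : (⟨fun p => p i, continuous_apply i⟩ : C(∀ j, X j, X i)).comp (u.comp (f k))
          = f k := by
        ext s; simp [hu]
      have h2 := ContinuousMap.Homotopic.comp (ContinuousMap.Homotopic.refl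
        (⟨fun p => p i, continuous_apply i⟩ : C(∀ j, X j, X i))) hhom
      rw [hp] at h2
      exact hEss k (c i) h2
    · have h2 := ((ContinuousMap.continuous_postcomp u).tendsto _).comp hten
      have : u.comp (ContinuousMap.const (Sph n) (x i)) = ContinuousMap.const (Sph n) x := by
        ext s; simp [hux]
      rw [this] at h2
      exact h2
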